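/- Let F be the free ℚ(v)-algebra on generators E_{i,l} for (i,l) ∈ I_∞, graded by deg E_{i,l} = l·i ∈ ℕI. Equip F⊗F with the twisted multiplication (a⊗b)(c⊗d) = v^{(|b|,|c|)} ac ⊗ bd, and define the algebra morphism δ: F → F⊗F by δ(E_{i,l}) = Σ_{t+t'=l} v_i^{t t'} E_{i,t} ⊗ E_{i,t'}. Then for any choice of scalars ν_ι (ι ∈ I_∞), there exists a unique bilinear form ⟨−,−⟩ on F such that: ⟨x,y⟩ = 0 if |x| ≠ |y|, ⟨E_ι, E_ι⟩ = ν_ι, and ⟨ab, c⟩ = ⟨a⊗b, δ(c)⟩, where the form on F⊗F is ⟨a⊗b, c⊗d⟩ = ⟨a,c⟩⟨b,d⟩. -/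

import Mathlib

/- Setting for the generalized quantum group: `I` is the vertex set of a quiver with loops,
`ω i` the number of loops at `i` (`i` is real iff `ω i = 0`), `e` the symmetric Euler form
with `e i i = 2 - 2 ω i`.  `I_∞ = (I^re × {1}) ∪ (I^im × ℕ_{≥1})` is the set of generators,
`F` is the free `ℚ(v)`-algebra on the generators `E_{i,l}` (`(i,l) ∈ I_∞`), realized as the
monoid algebra of the free monoid on `I_∞`.  `F ⊗ F` carries the twisted multiplication
`(a⊗b)(c⊗d) = v^{(|b|,|c|)} ac ⊗ bd`, and `δ : F → F ⊗ F` is the algebra morphism with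
`δ(E_{i,l}) = Σ_{t+t'=l} v_i^{tt'} E_{i,t} ⊗ E_{i,t'}` (`v_i = v^{(i,i)/2} = v^{1-ω i}`). -/

open scoped Classical

noncomputable section

/-- The base field `ℚ(v)`. -/
abbrev Kv : Type := RatFunc ℚ

/-- The variable `v`. -/
def vq : Kv := RatFunc.X

variable {I : Type} [DecidableEq I]

/-- The index set `I_∞`: pairs `(i,l)` with `l ≥ 1`, and `l = 1` if `i` is real. -/
def GenI (ω : I → ℕ) : Type := {p : I × ℕ // 1 ≤ p.2 ∧ (ω p.1 = 0 → p.2 = 1)}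

/-- The free algebra `F` on the generators `E_ι`, `ι ∈ I_∞`, as a monoid algebra. -/
abbrev FA (ω : I → ℕ) : Type := MonoidAlgebra Kv (FreeMonoid (GenI ω))

/-- The monomial of `F` attached to a word in the generators. -/
def sw (ω : I → ℕ) (w : List (GenI ω)) : FA ω :=
  MonoidAlgebra.single (FreeMonoid.ofList w) (1 : Kv)

/-- The weight (degree in `ℕI`) of a word. -/
def wtw (ω : I → ℕ) (w : List (GenI ω)) : I → ℕ := fun i =>
  ((w.filter (fun g => g.1.1 = i)).map (fun g => g.1.2)).sum

/-- `F ⊗ F` as a module: formal linear combinations of pairs of words. -/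
abbrev TT (ω : I → ℕ) : Type := (List (GenI ω) × List (GenI ω)) →₀ Kv

/-- The Euler pairing `(|u|, |w|)` of the weights of two words. -/
def eWt (ω : I → ℕ) (e : I → I → ℤ) (u w : List (GenI ω)) : ℤ :=
  (u.map (fun g => (w.map (fun g' => (g.1.2 : ℤ) * (g'.1.2 : ℤ) * e g.1.1 g'.1.1)).sum)).sum

/-- The twisted multiplication on `F ⊗ F`:
`(a⊗b)(c⊗d) = v^{(|b|,|c|)} ac ⊗ bd`. -/
def tmul (ω : I → ℕ) (e : I → I → ℤ) (f h : TT ω) : TT ω :=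
  f.sum fun p a => h.sum fun q b =>
    Finsupp.single (p.1 ++ q.1, p.2 ++ q.2) (a * b * vq ^ (eWt ω e p.2 q.1))

/-- The word representing `E_{i,t}` (empty if `t = 0`), built from a generator `g = (i,l)`
with `t ≤ l`. -/
def mkw (ω : I → ℕ) (g : GenI ω) (t : ℕ) (ht : t ≤ g.1.2) : List (GenI ω) :=
  if h1 : 1 ≤ t then
    [⟨(g.1.1, t), h1, fun h0 => le_antisymm (ht.trans_eq (g.2.2 h0)) h1⟩]
  else []

/-- `δ(E_{i,l}) = Σ_{t+t'=l} v_i^{t t'} E_{i,t} ⊗ E_{i,t'}`, with `v_i = v^{1-ω i}`. -/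
def deltaGen (ω : I → ℕ) (g : GenI ω) : TT ω :=
  ∑ t ∈ (Finset.range (g.1.2 + 1)).attach,
    (vq ^ ((1 - (ω g.1.1 : ℤ)) * (t.1 : ℤ) * ((g.1.2 : ℤ) - (t.1 : ℤ)))) •
      Finsupp.single
        (mkw ω g t.1 (Nat.le_of_lt_succ (Finset.mem_range.mp t.2)),
         mkw ω g (g.1.2 - t.1) (Nat.sub_le _ _)) (1 : Kv)

/-- `δ` on words: the product (in the twisted algebra `F ⊗ F`) of the `δ` of the letters. -/
def deltaWord (ω : I → ℕ) (e : I → I → ℤ) : List (GenI ω) → TT ω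
  | [] => Finsupp.single ([], []) 1
  | g :: w => tmul ω e (deltaGen ω g) (deltaWord ω e w)

/-- The comultiplication `δ : F → F ⊗ F` (linear extension). -/
def deltaF (ω : I → ℕ) (e : I → I → ℤ) (c : FA ω) : TT ω :=
  c.coeff.sum fun w a => a • deltaWord ω e (FreeMonoid.toList w)

/-- The axioms of the Hopf pairing `⟨-,-⟩` on `F` attached to the family `ν`:
`⟨1,1⟩ = 1`; `⟨x,y⟩ = 0` for homogeneous `x, y` of different weights; `⟨E_ι,E_ι⟩ = ν_ι`;
`⟨ab, c⟩ = ⟨a ⊗ b, δ(c)⟩` and `⟨a, bc⟩ = ⟨δ(a), b ⊗ c⟩`, where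
`⟨a⊗b, c⊗d⟩ = ⟨a,c⟩⟨b,d⟩`. -/
def PairingAxioms (ω : I → ℕ) (e : I → I → ℤ) (ν : GenI ω → Kv)
    (B : FA ω →ₗ[Kv] FA ω →ₗ[Kv] Kv) : Prop :=
  B 1 1 = 1 ∧
  (∀ w w' : List (GenI ω), wtw ω w ≠ wtw ω w' → B (sw ω w) (sw ω w') = 0) ∧
  (∀ g : GenI ω, B (sw ω [g]) (sw ω [g]) = ν g) ∧
  (∀ a b c : FA ω,
    B (a * b) c = (deltaF ω e c).sum fun p coeff =>
      coeff * B a (sw ω p.1) * B b (sw ω p.2)) ∧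
  (∀ a b c : FA ω,
    B a (b * c) = (deltaF ω e a).sum fun p coeff =>
      coeff * B (sw ω p.1) b * B (sw ω p.2) c)

end

noncomputable section
namespace HP

variable {I : Type} [DecidableEq I] {ω : I → ℕ}

lemma vq_ne_zero : (vq : Kv) ≠ 0 := RatFunc.X_ne_zero

lemma vq_zpow_add (a b : ℤ) : vq ^ (a + b) = vq ^ a * vq ^ b := zpow_add₀ vq_ne_zero a b

/-- generic linear evaluation of a `TT`-like finsupp against a function -/
def lsum {α : Type*} (f : α →₀ Kv) (k : α → Kv) : Kv := f.sum fun p c => c * k p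

lemma lsum_zero {α : Type*} (k : α → Kv) : lsum (0 : α →₀ Kv) k = 0 := Finsupp.sum_zero_index

lemma lsum_single {α : Type*} (a : α) (c : Kv) (k : α → Kv) :
    lsum (Finsupp.single a c) k = c * k a :=
  Finsupp.sum_single_index (zero_mul _)

lemma lsum_add {α : Type*} (f g : α →₀ Kv) (k : α → Kv) :
    lsum (f + g) k = lsum f k + lsum g k :=
  Finsupp.sum_add_index' (fun _ => zero_mul _) (fun _ _ _ => add_mul _ _ _)

lemma lsum_smul {α : Type*} (c : Kv) (f : α →₀ Kv) (k : α → Kv) :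
    lsum (c • f) k = c * lsum f k := by
  induction f using Finsupp.induction_linear with
  | zero => simp [lsum_zero]
  | add f g hf hg => rw [smul_add, lsum_add, lsum_add, hf, hg, mul_add]
  | single a b => rw [Finsupp.smul_single, lsum_single, lsum_single, smul_eq_mul, mul_assoc]

lemma lsum_finset_sum {α β : Type*} (s : Finset β) (f : β → (α →₀ Kv)) (k : α → Kv) :
    lsum (∑ i ∈ s, f i) k = ∑ i ∈ s, lsum (f i) k := by
  classical
  induction s using Finset.induction_on with
  | empty => simp [lsum_zero]
  | @insert a s h ih => rw [Finset.sum_insert h, Finset.sum_insert h, lsum_add, ih]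

lemma lsum_congr {α : Type*} {f : α →₀ Kv} {k k' : α → Kv}
    (h : ∀ p ∈ f.support, k p = k' p) : lsum f k = lsum f k' :=
  Finsupp.sum_congr fun p hp => by rw [h p hp]

lemma lsum_sum {α β : Type*} (f : β →₀ Kv) (g : β → Kv → (α →₀ Kv)) (k : α → Kv) :
    lsum (f.sum g) k = ∑ b ∈ f.support, lsum (g b (f b)) k := by
  rw [Finsupp.sum, lsum_finset_sum]

/-- swap two independent lsums -/
lemma lsum_swap {α β : Type*} (f : α →₀ Kv) (g : β →₀ Kv) (k : α → β → Kv) :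
    lsum f (fun p => lsum g (fun q => k p q)) = lsum g (fun q => lsum f (fun p => k p q)) := by
  unfold lsum Finsupp.sum
  beta_reduce
  simp only [Finset.mul_sum]
  rw [Finset.sum_comm]
  exact Finset.sum_congr rfl fun q _ => Finset.sum_congr rfl fun p _ => by ring

/-- pull a constant into an lsum -/
lemma lsum_const_mul {α : Type*} (c : Kv) (f : α →₀ Kv) (k : α → Kv) :
    c * lsum f k = lsum f (fun p => c * k p) := by
  unfold lsum Finsupp.sum
  rw [Finset.mul_sum]
  exact Finset.sum_congr rfl fun p _ => by ring

lemma lsum_finsetsum_out {α β : Type*} (f : α →₀ Kv) (s : Finset β) (k : α → β → Kv) :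
    lsum f (fun p => ∑ b ∈ s, k p b) = ∑ b ∈ s, lsum f (fun p => k p b) := by
  unfold lsum Finsupp.sum
  beta_reduce
  rw [Finset.sum_comm]
  apply Finset.sum_congr rfl
  intro p _
  rw [Finset.mul_sum]

end HP
end

noncomputable section
namespace HP

variable {I : Type} [DecidableEq I] (ω : I → ℕ) (e : I → I → ℤ)

set_option linter.unusedSectionVars false

/-! ### weights -/

lemma wtw_nil (i : I) : wtw ω [] i = 0 := rfl

lemma wtw_cons (g : GenI ω) (w : List (GenI ω)) (i : I) :
    wtw ω (g :: w) i = (if g.1.1 = i then g.1.2 else 0) + wtw ω w i := by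
  simp only [wtw, List.filter_cons]
  split <;> simp_all

lemma wtw_append (u w : List (GenI ω)) (i : I) :
    wtw ω (u ++ w) i = wtw ω u i + wtw ω w i := by
  simp [wtw, List.filter_append]

lemma wtw_single (g : GenI ω) (i : I) :
    wtw ω [g] i = if g.1.1 = i then g.1.2 else 0 := by
  rw [wtw_cons, wtw_nil, add_zero]

lemma wtw_cons_pos (g : GenI ω) (w : List (GenI ω)) : 0 < wtw ω (g :: w) g.1.1 := by
  rw [wtw_cons, if_pos rfl]
  have := g.2.1
  omega

lemma gen_eq_of_wtw {g g' : GenI ω} (h : wtw ω [g] = wtw ω [g']) : g = g' := by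
  have hg := g.2.1
  by_cases hii : g.1.1 = g'.1.1
  · have h2 := congrFun h g'.1.1
    rw [wtw_single, wtw_single, if_pos hii, if_pos rfl] at h2
    exact Subtype.ext (Prod.ext hii h2)
  · have h1 := congrFun h g.1.1
    rw [wtw_single, wtw_single, if_pos rfl, if_neg (fun hh => hii hh.symm)] at h1
    omega

/-! ### Euler pairing lemmas -/

lemma eWt_nil_left (w : List (GenI ω)) : eWt ω e [] w = 0 := rfl

lemma eWt_nil_right (u : List (GenI ω)) : eWt ω e u [] = 0 := by
  simp [eWt]

lemma eWt_cons_left (g : GenI ω) (u w : List (GenI ω)) :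
    eWt ω e (g :: u) w =
      (w.map (fun g' => (g.1.2 : ℤ) * (g'.1.2 : ℤ) * e g.1.1 g'.1.1)).sum + eWt ω e u w := by
  simp [eWt]

lemma eWt_append_left (u u' w : List (GenI ω)) :
    eWt ω e (u ++ u') w = eWt ω e u w + eWt ω e u' w := by
  simp [eWt]

lemma eWt_append_right (u w w' : List (GenI ω)) :
    eWt ω e u (w ++ w') = eWt ω e u w + eWt ω e u w' := by
  simp only [eWt, List.map_append, List.sum_append, ← List.sum_map_add]

lemma eWt_cons_right (g' : GenI ω) (u w : List (GenI ω)) :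
    eWt ω e u (g' :: w) =
      (u.map (fun g => (g.1.2 : ℤ) * (g'.1.2 : ℤ) * e g.1.1 g'.1.1)).sum + eWt ω e u w := by
  have : g' :: w = [g'] ++ w := rfl
  rw [this, eWt_append_right]
  congr 1
  simp [eWt]

/-- `eWt u x` rewritten as a finite sum over vertices, weighted by `wtw u`. -/
lemma eWt_eq_sum_over (u : List (GenI ω)) (c : I → ℤ) (s : Finset I)
    (hs : ∀ g ∈ u, g.1.1 ∈ s) :
    (u.map fun g => (g.1.2 : ℤ) * c g.1.1).sum = ∑ i ∈ s, (wtw ω u i : ℤ) * c i := by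
  induction u with
  | nil => simp [wtw_nil]
  | cons g u ih =>
    have hgs : g.1.1 ∈ s := hs g List.mem_cons_self
    have ihs := ih (fun g' hg' => hs g' (List.mem_cons_of_mem _ hg'))
    simp only [List.map_cons, List.sum_cons, ihs]
    have : ∀ i ∈ s, (wtw ω (g :: u) i : ℤ) * c i =
        (if g.1.1 = i then (g.1.2 : ℤ) * c i else 0) + (wtw ω u i : ℤ) * c i := by
      intro i _
      rw [wtw_cons]
      push_cast
      split <;> ring
    rw [Finset.sum_congr rfl this, Finset.sum_add_distrib, Finset.sum_ite_eq s g.1.1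
      (fun i => (g.1.2 : ℤ) * c i), if_pos hgs]

lemma eWt_inner (u w : List (GenI ω)) :
    eWt ω e u w = (u.map fun g => (g.1.2 : ℤ) *
      ((w.map fun g' => (g'.1.2 : ℤ) * e g.1.1 g'.1.1).sum)).sum := by
  simp only [eWt]
  congr 1
  apply List.map_congr_left
  intro g _
  rw [← List.sum_map_mul_left]
  congr 1
  apply List.map_congr_left
  intro g' _
  ring

lemma eWt_congr_left {u u' : List (GenI ω)} (w : List (GenI ω))
    (h : wtw ω u = wtw ω u') : eWt ω e u w = eWt ω e u' w := by
  classical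
  set s : Finset I := (u.map fun g => g.1.1).toFinset ∪ (u'.map fun g => g.1.1).toFinset with hs
  set c : I → ℤ := fun i => (w.map fun g' => (g'.1.2 : ℤ) * e i g'.1.1).sum with hc
  have A : eWt ω e u w = ∑ i ∈ s, (wtw ω u i : ℤ) * c i :=
    (eWt_inner ω e u w).trans (eWt_eq_sum_over ω u c s
      (by intro g hg; simp only [hs, Finset.mem_union, List.mem_toFinset, List.mem_map]
          exact Or.inl ⟨g, hg, rfl⟩))
  have B : eWt ω e u' w = ∑ i ∈ s, (wtw ω u' i : ℤ) * c i :=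
    (eWt_inner ω e u' w).trans (eWt_eq_sum_over ω u' c s
      (by intro g hg; simp only [hs, Finset.mem_union, List.mem_toFinset, List.mem_map]
          exact Or.inr ⟨g, hg, rfl⟩))
  rw [A, B, h]

lemma eWt_comm (hsym : ∀ i j, e i j = e j i) (u w : List (GenI ω)) :
    eWt ω e u w = eWt ω e w u := by
  induction u with
  | nil => rw [eWt_nil_left, eWt_nil_right]
  | cons g u ih =>
    rw [eWt_cons_left, eWt_cons_right, ih]
    congr 2
    apply List.map_congr_left
    intro g' _
    rw [hsym]
    ring

lemma eWt_congr_right {w w' : List (GenI ω)} (hsym : ∀ i j, e i j = e j i)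
    (u : List (GenI ω)) (h : wtw ω w = wtw ω w') : eWt ω e u w = eWt ω e u w' := by
  rw [eWt_comm ω e hsym, eWt_congr_left ω e u h, ← eWt_comm ω e hsym]


/-! ### mkw0 : proof-free version of mkw -/

def mkw0 (g : GenI ω) (t : ℕ) : List (GenI ω) :=
  if h : 1 ≤ t ∧ t ≤ g.1.2 then
    [⟨(g.1.1, t), h.1, fun h0 => le_antisymm (h.2.trans_eq (g.2.2 h0)) h.1⟩] else []

variable {ω}

lemma mkw_eq_mkw0 (g : GenI ω) (t : ℕ) (ht : t ≤ g.1.2) : mkw ω g t ht = mkw0 ω g t := by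
  unfold mkw mkw0
  by_cases h1 : 1 ≤ t
  · rw [dif_pos h1, dif_pos ⟨h1, ht⟩]
  · rw [dif_neg h1, dif_neg (fun hh => h1 hh.1)]

lemma mkw0_zero (g : GenI ω) : mkw0 ω g 0 = [] := by
  unfold mkw0; rw [dif_neg]; omega

lemma mkw0_full (g : GenI ω) : mkw0 ω g g.1.2 = [g] := by
  unfold mkw0
  rw [dif_pos ⟨g.2.1, le_rfl⟩]
  congr 1

lemma mkw0_length (g : GenI ω) (t : ℕ) : (mkw0 ω g t).length ≤ 1 := by
  unfold mkw0; split
  · exact le_rfl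
  · exact Nat.zero_le _

lemma mkw0_ne_nil (g : GenI ω) {t : ℕ} (h1 : 1 ≤ t) (h2 : t ≤ g.1.2) : mkw0 ω g t ≠ [] := by
  unfold mkw0; rw [dif_pos ⟨h1, h2⟩]; simp

lemma wtw_mkw0 (g : GenI ω) {t : ℕ} (ht : t ≤ g.1.2) (i : I) :
    wtw ω (mkw0 ω g t) i = if g.1.1 = i then t else 0 := by
  unfold mkw0
  by_cases h1 : 1 ≤ t
  · rw [dif_pos ⟨h1, ht⟩]
    exact wtw_single ω _ i
  · rw [dif_neg (fun hh => h1 hh.1)]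
    have : t = 0 := by omega
    subst this
    rw [wtw_nil]
    split <;> rfl

lemma mkw0_eq_of_fst {g h : GenI ω} (hgh : g.1.1 = h.1.1) {t : ℕ}
    (htg : t ≤ g.1.2) (hth : t ≤ h.1.2) : mkw0 ω g t = mkw0 ω h t := by
  unfold mkw0
  by_cases h1 : 1 ≤ t
  · rw [dif_pos ⟨h1, htg⟩, dif_pos ⟨h1, hth⟩]
    congr 1
    exact Subtype.ext (Prod.ext hgh rfl)
  · rw [dif_neg (fun hh => h1 hh.1), dif_neg (fun hh => h1 hh.1)]

/-! ### support lemmas -/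

lemma support_deltaGen {g : GenI ω} {p : List (GenI ω) × List (GenI ω)}
    (hp : p ∈ (deltaGen ω g).support) :
    ∃ t ≤ g.1.2, p = (mkw0 ω g t, mkw0 ω g (g.1.2 - t)) := by
  unfold deltaGen at hp
  have h1 := Finsupp.support_finset_sum hp
  obtain ⟨t, _, hmem⟩ := Finset.mem_biUnion.mp h1
  have h2 := Finsupp.support_smul hmem
  have h3 := Finsupp.support_single_subset h2
  rw [Finset.mem_singleton] at h3
  refine ⟨t.1, Nat.le_of_lt_succ (Finset.mem_range.mp t.2), ?_⟩
  rw [h3, mkw_eq_mkw0, mkw_eq_mkw0]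

lemma support_tmul {f h : TT ω} {p : List (GenI ω) × List (GenI ω)}
    (hp : p ∈ (tmul ω e f h).support) :
    ∃ a ∈ f.support, ∃ b ∈ h.support, p = (a.1 ++ b.1, a.2 ++ b.2) := by
  unfold tmul at hp
  have h1 := Finsupp.support_sum hp
  obtain ⟨a, ha, hmem⟩ := Finset.mem_biUnion.mp h1
  have h2 := Finsupp.support_sum hmem
  obtain ⟨b, hb, hmem2⟩ := Finset.mem_biUnion.mp h2
  have h3 := Finsupp.support_single_subset hmem2
  rw [Finset.mem_singleton] at h3
  exact ⟨a, ha, b, hb, h3⟩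

lemma support_deltaWord {w : List (GenI ω)} {p : List (GenI ω) × List (GenI ω)}
    (hp : p ∈ (deltaWord ω e w).support) :
    p.1.length ≤ w.length ∧ p.2.length ≤ w.length ∧
      ∀ i, wtw ω p.1 i + wtw ω p.2 i = wtw ω w i := by
  induction w generalizing p with
  | nil =>
    have h3 := Finsupp.support_single_subset (by exact hp : p ∈ _)
    rw [Finset.mem_singleton] at h3
    subst h3
    exact ⟨by simp, by simp, fun i => rfl⟩
  | cons g w ih =>
    obtain ⟨a, ha, b, hb, hab⟩ := support_tmul e hp
    obtain ⟨t, ht, hat⟩ := support_deltaGen ha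
    obtain ⟨hb1, hb2, hbw⟩ := ih hb
    subst hab hat
    have hl1 : (mkw0 ω g t).length ≤ 1 := mkw0_length g t
    have hl2 : (mkw0 ω g (g.1.2 - t)).length ≤ 1 := mkw0_length g _
    refine ⟨?_, ?_, ?_⟩
    · simp only [List.length_append, List.length_cons]; omega
    · simp only [List.length_append, List.length_cons]; omega
    · intro i
      have e1 := wtw_mkw0 g ht i
      have e2 := wtw_mkw0 g (Nat.sub_le g.1.2 t) i
      rw [wtw_append, wtw_append, wtw_cons, e1, e2]
      have := hbw i
      split <;> omega

/-! ### the scalar comultiplication pairing `Dw` -/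

variable (ω) in
def Dw (e : I → I → ℤ) (w : List (GenI ω)) (k : List (GenI ω) × List (GenI ω) → Kv) : Kv :=
  lsum (deltaWord ω e w) k

lemma Dw_nil (k : List (GenI ω) × List (GenI ω) → Kv) : Dw ω e [] k = k ([], []) := by
  unfold Dw deltaWord
  rw [lsum_single, one_mul]

lemma Dw_zero (w : List (GenI ω)) : Dw ω e w (fun _ => 0) = 0 := by
  unfold Dw lsum
  simp [Finsupp.sum]

lemma Dw_congr {w : List (GenI ω)} {k k' : List (GenI ω) × List (GenI ω) → Kv}
    (h : ∀ p, p.1.length ≤ w.length → p.2.length ≤ w.length →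
      (∀ i, wtw ω p.1 i + wtw ω p.2 i = wtw ω w i) → k p = k' p) :
    Dw ω e w k = Dw ω e w k' := by
  refine lsum_congr fun p hp => ?_
  obtain ⟨h1, h2, h3⟩ := support_deltaWord e hp
  exact h p h1 h2 h3

lemma lsum_tmul (f h : TT ω) (k : List (GenI ω) × List (GenI ω) → Kv) :
    lsum (tmul ω e f h) k =
      lsum f fun p => lsum h fun q =>
        vq ^ (eWt ω e p.2 q.1) * k (p.1 ++ q.1, p.2 ++ q.2) := by
  unfold tmul
  rw [lsum_sum]
  have step : ∀ p ∈ f.support,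
      lsum (h.sum fun q b => Finsupp.single (p.1 ++ q.1, p.2 ++ q.2)
          (f p * b * vq ^ eWt ω e p.2 q.1)) k =
      f p * (h.sum fun q b => b * (vq ^ (eWt ω e p.2 q.1) * k (p.1 ++ q.1, p.2 ++ q.2))) := by
    intro p _
    rw [lsum_sum, Finsupp.sum, Finset.mul_sum]
    exact Finset.sum_congr rfl fun q _ => by rw [lsum_single]; ring
  rw [Finset.sum_congr rfl step]
  rfl

lemma Dw_cons (g : GenI ω) (w : List (GenI ω)) (k : List (GenI ω) × List (GenI ω) → Kv) :
    Dw ω e (g :: w) k = lsum (deltaGen ω g) fun p => Dw ω e w fun q =>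
      vq ^ (eWt ω e p.2 q.1) * k (p.1 ++ q.1, p.2 ++ q.2) := by
  unfold Dw
  rw [show deltaWord ω e (g :: w) = tmul ω e (deltaGen ω g) (deltaWord ω e w) from rfl,
    lsum_tmul]

lemma lsum_deltaGen (g : GenI ω) (k : List (GenI ω) × List (GenI ω) → Kv) :
    lsum (deltaGen ω g) k = ∑ t ∈ Finset.range (g.1.2 + 1),
      vq ^ ((1 - (ω g.1.1 : ℤ)) * (t : ℤ) * ((g.1.2 : ℤ) - (t : ℤ))) *
        k (mkw0 ω g t, mkw0 ω g (g.1.2 - t)) := by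
  unfold deltaGen
  rw [lsum_finset_sum]
  rw [Finset.sum_congr rfl (fun t _ => by
    rw [lsum_smul, lsum_single, one_mul, mkw_eq_mkw0, mkw_eq_mkw0])]
  exact Finset.sum_attach (Finset.range (g.1.2 + 1)) (fun t =>
    vq ^ ((1 - (ω g.1.1 : ℤ)) * (t : ℤ) * ((g.1.2 : ℤ) - (t : ℤ))) *
      k (mkw0 ω g t, mkw0 ω g (g.1.2 - t)))

lemma Dw_single (g : GenI ω) (k : List (GenI ω) × List (GenI ω) → Kv) :
    Dw ω e [g] k = lsum (deltaGen ω g) k := by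
  rw [Dw_cons]
  refine lsum_congr fun p _ => ?_
  rw [Dw_nil, eWt_nil_right, zpow_zero, one_mul, List.append_nil, List.append_nil]

lemma Dw_mkw0 (g : GenI ω) {m : ℕ} (hm : m ≤ g.1.2) (k : List (GenI ω) × List (GenI ω) → Kv) :
    Dw ω e (mkw0 ω g m) k = ∑ a ∈ Finset.range (m + 1),
      vq ^ ((1 - (ω g.1.1 : ℤ)) * (a : ℤ) * ((m : ℤ) - (a : ℤ))) *
        k (mkw0 ω g a, mkw0 ω g (m - a)) := by
  by_cases h1 : 1 ≤ m
  · set h : GenI ω := ⟨(g.1.1, m), h1, fun h0 => le_antisymm (hm.trans_eq (g.2.2 h0)) h1⟩ with hh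
    have hmk : mkw0 ω g m = [h] := by
      unfold mkw0; rw [dif_pos ⟨h1, hm⟩]
    rw [hmk, Dw_single, lsum_deltaGen]
    apply Finset.sum_congr rfl
    intro a ha
    have ha' : a ≤ m := Nat.le_of_lt_succ (Finset.mem_range.mp ha)
    have e1 : mkw0 ω h a = mkw0 ω g a := mkw0_eq_of_fst (show (h : GenI ω).1.1 = g.1.1 from rfl) ha' (le_trans ha' hm)
    have e2 : mkw0 ω h ((h : GenI ω).1.2 - a) = mkw0 ω g (m - a) :=
      mkw0_eq_of_fst (show (h : GenI ω).1.1 = g.1.1 from rfl) (Nat.sub_le _ _)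
        (le_trans (Nat.sub_le _ _) hm)
    rw [e1, e2]
  · have hm0 : m = 0 := by omega
    subst hm0
    rw [mkw0_zero, Dw_nil]
    simp [mkw0_zero]


lemma Dw_const_mul (c : Kv) (w : List (GenI ω)) (k : List (GenI ω) × List (GenI ω) → Kv) :
    c * Dw ω e w k = Dw ω e w (fun p => c * k p) :=
  lsum_const_mul c _ k

lemma Dw_swap (w u : List (GenI ω)) (k : _ → _ → Kv) :
    Dw ω e w (fun p => Dw ω e u (fun q => k p q)) =
      Dw ω e u (fun q => Dw ω e w (fun p => k p q)) :=
  lsum_swap _ _ k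

lemma lsum_Dw_swap (f : TT ω) (w : List (GenI ω)) (k : _ → _ → Kv) :
    lsum f (fun p => Dw ω e w (fun q => k p q)) =
      Dw ω e w (fun q => lsum f (fun p => k p q)) :=
  lsum_swap _ _ k

/-! ### `Dw` is multiplicative -/

lemma Dw_append (u w : List (GenI ω)) (k : List (GenI ω) × List (GenI ω) → Kv) :
    Dw ω e (u ++ w) k = Dw ω e u fun p => Dw ω e w fun q =>
      vq ^ (eWt ω e p.2 q.1) * k (p.1 ++ q.1, p.2 ++ q.2) := by
  induction u generalizing k with
  | nil =>
    rw [List.nil_append, Dw_nil]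
    refine (congrArg (Dw ω e w) (funext fun q => ?_)).symm
    rw [eWt_nil_left, zpow_zero, one_mul, List.nil_append, List.nil_append]
  | cons g u ih =>
    rw [List.cons_append, Dw_cons, Dw_cons]
    refine lsum_congr fun p _ => ?_
    rw [ih]
    refine congrArg (Dw ω e u) (funext fun q => ?_)
    rw [Dw_const_mul]
    refine congrArg (Dw ω e w) (funext fun r => ?_)
    dsimp only
    rw [eWt_append_right, eWt_append_left, ← List.append_assoc, ← List.append_assoc,
      zpow_add₀ vq_ne_zero, zpow_add₀ vq_ne_zero]
    ring

/-! ### counit properties -/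

def e0 {α : Type*} (x : List α) : Kv := if x = [] then 1 else 0

@[simp] lemma e0_nil {α : Type*} : e0 ([] : List α) = 1 := if_pos rfl

@[simp] lemma e0_cons {α : Type*} (a : α) (x : List α) : e0 (a :: x) = 0 :=
  if_neg (by simp)

lemma e0_append {α : Type*} (x y : List α) : e0 (x ++ y) = e0 x * e0 y := by
  cases x with
  | nil => simp
  | cons a x => simp

lemma e0_of_ne_nil {α : Type*} {x : List α} (h : x ≠ []) : e0 x = 0 := if_neg h

lemma Dw_counit_left (w : List (GenI ω)) (k : List (GenI ω) → Kv) :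
    Dw ω e w (fun p => e0 p.1 * k p.2) = k w := by
  induction w generalizing k with
  | nil => rw [Dw_nil]; simp
  | cons g w ih =>
    rw [Dw_cons, lsum_deltaGen]
    rw [Finset.sum_eq_single 0]
    · have h0 : ((1 - (ω g.1.1 : ℤ)) * ((0:ℕ) : ℤ) * ((g.1.2 : ℤ) - ((0:ℕ) : ℤ))) = 0 := by
        push_cast; ring
      rw [h0, zpow_zero, one_mul, mkw0_zero, Nat.sub_zero, mkw0_full]
      have hfn : (fun q : List (GenI ω) × List (GenI ω) =>
          vq ^ (eWt ω e [g] q.1) * (e0 ([] ++ q.1) * k ([g] ++ q.2))) =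
          (fun q => e0 q.1 * (fun x => k (g :: x)) q.2) := by
        funext q
        by_cases hq : q.1 = []
        · rw [hq]
          simp [eWt_nil_right]
        · rw [List.nil_append, e0_of_ne_nil hq]
          simp
      rw [hfn]
      exact ih (fun x => k (g :: x))
    · intro t ht htne
      have h1 : 1 ≤ t := Nat.one_le_iff_ne_zero.mpr htne
      have h2 : t ≤ g.1.2 := Nat.le_of_lt_succ (Finset.mem_range.mp ht)
      have hne : mkw0 ω g t ≠ [] := mkw0_ne_nil g h1 h2
      have : (fun q : List (GenI ω) × List (GenI ω) =>
          vq ^ (eWt ω e (mkw0 ω g (g.1.2 - t)) q.1) *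
            (e0 (mkw0 ω g t ++ q.1) * k (mkw0 ω g (g.1.2 - t) ++ q.2))) = fun _ => 0 := by
        funext q
        rw [e0_of_ne_nil (fun hh => hne (List.append_eq_nil_iff.mp hh).1)]
        ring
      rw [this, Dw_zero, mul_zero]
    · intro h
      exact absurd (Finset.mem_range.mpr (Nat.succ_pos _)) h

lemma Dw_counit_right (w : List (GenI ω)) (k : List (GenI ω) → Kv) :
    Dw ω e w (fun p => k p.1 * e0 p.2) = k w := by
  induction w generalizing k with
  | nil => rw [Dw_nil]; simp
  | cons g w ih =>
    rw [Dw_cons, lsum_deltaGen]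
    rw [Finset.sum_eq_single g.1.2]
    · have h0 : ((1 - (ω g.1.1 : ℤ)) * ((g.1.2:ℕ) : ℤ) * ((g.1.2 : ℤ) - ((g.1.2:ℕ) : ℤ))) = 0 := by
        push_cast; ring
      rw [h0, zpow_zero, one_mul, mkw0_full, Nat.sub_self, mkw0_zero]
      have hfn : (fun q : List (GenI ω) × List (GenI ω) =>
          vq ^ (eWt ω e [] q.1) * ((fun p => k p.1 * e0 p.2) ([g] ++ q.1, [] ++ q.2))) =
          (fun q => (fun x => k (g :: x)) q.1 * e0 q.2) := by
        funext q
        rw [eWt_nil_left, zpow_zero, one_mul, List.nil_append]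
        rfl
      rw [hfn]
      exact ih (fun x => k (g :: x))
    · intro t ht htne
      have h2 : t ≤ g.1.2 := Nat.le_of_lt_succ (Finset.mem_range.mp ht)
      have h1 : 1 ≤ g.1.2 - t := by omega
      have hne : mkw0 ω g (g.1.2 - t) ≠ [] := mkw0_ne_nil g h1 (Nat.sub_le _ _)
      have : (fun q : List (GenI ω) × List (GenI ω) =>
          vq ^ (eWt ω e (mkw0 ω g (g.1.2 - t)) q.1) *
            ((fun p => k p.1 * e0 p.2) (mkw0 ω g t ++ q.1, mkw0 ω g (g.1.2 - t) ++ q.2))) =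
          fun _ => 0 := by
        funext q
        show _ * (_ * e0 (mkw0 ω g (g.1.2 - t) ++ q.2)) = 0
        rw [e0_of_ne_nil (fun hh => hne (List.append_eq_nil_iff.mp hh).1)]
        ring
      rw [this, Dw_zero, mul_zero]
    · intro h
      exact absurd (Finset.mem_range.mpr (Nat.lt_succ_self _)) h

/-! ### coassociativity -/

lemma triangle_reindex (l : ℕ) (F : ℕ → ℕ → ℕ → Kv) :
    ∑ t ∈ Finset.range (l + 1), ∑ a ∈ Finset.range (l - t + 1), F t a (l - t - a)
    = ∑ t ∈ Finset.range (l + 1), ∑ a ∈ Finset.range (t + 1), F a (t - a) (l - t) := by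
  rw [Finset.sum_sigma' (Finset.range (l+1)) (fun t => Finset.range (l - t + 1))
      (fun t a => F t a (l - t - a)),
    Finset.sum_sigma' (Finset.range (l+1)) (fun t => Finset.range (t + 1))
      (fun t a => F a (t - a) (l - t))]
  refine Finset.sum_nbij' (fun x => ⟨x.1 + x.2, x.1⟩) (fun y => ⟨y.2, y.1 - y.2⟩) ?_ ?_ ?_ ?_ ?_
  · rintro ⟨a, b⟩ hab
    simp only [Finset.mem_sigma, Finset.mem_range] at hab ⊢
    omega
  · rintro ⟨a, b⟩ hab
    simp only [Finset.mem_sigma, Finset.mem_range] at hab ⊢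
    omega
  · rintro ⟨a, b⟩ hab
    simp only [Finset.mem_sigma, Finset.mem_range] at hab
    dsimp only
    rw [show a + b - a = b by omega]
  · rintro ⟨a, b⟩ hab
    simp only [Finset.mem_sigma, Finset.mem_range] at hab
    dsimp only
    rw [show b + (a - b) = a by omega]
  · rintro ⟨a, b⟩ hab
    simp only [Finset.mem_sigma, Finset.mem_range] at hab
    dsimp only
    rw [show a + b - a = b by omega, show l - (a + b) = l - a - b by omega]

/-- coassociativity at the level of a single generator -/
lemma coa_gen (g : GenI ω) (G : List (GenI ω) × List (GenI ω) × List (GenI ω) → Kv) :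
    lsum (deltaGen ω g) (fun p => Dw ω e p.2 (fun r => G (p.1, r.1, r.2)))
    = lsum (deltaGen ω g) (fun p => Dw ω e p.1 (fun r => G (r.1, r.2, p.2))) := by
  rw [lsum_deltaGen, lsum_deltaGen]
  have LHS : ∀ t ∈ Finset.range (g.1.2 + 1),
      vq ^ ((1 - (ω g.1.1 : ℤ)) * (t : ℤ) * ((g.1.2 : ℤ) - (t : ℤ))) *
        Dw ω e (mkw0 ω g (g.1.2 - t)) (fun r => G (mkw0 ω g t, r.1, r.2)) =
      ∑ a ∈ Finset.range (g.1.2 - t + 1),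
        (fun x y z : ℕ => vq ^ ((1 - (ω g.1.1 : ℤ)) *
            ((x : ℤ) * y + (x : ℤ) * z + (y : ℤ) * z)) *
          G (mkw0 ω g x, mkw0 ω g y, mkw0 ω g z)) t a (g.1.2 - t - a) := by
    intro t ht
    have ht' : t ≤ g.1.2 := Nat.le_of_lt_succ (Finset.mem_range.mp ht)
    rw [Dw_mkw0 e g (Nat.sub_le _ _), Finset.mul_sum]
    refine Finset.sum_congr rfl fun a ha => ?_
    have ha' : a ≤ g.1.2 - t := Nat.le_of_lt_succ (Finset.mem_range.mp ha)
    simp only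
    rw [← mul_assoc, ← zpow_add₀ vq_ne_zero]
    congr 2
    have c1 : ((g.1.2 - t : ℕ) : ℤ) = (g.1.2 : ℤ) - t := by omega
    have c2 : ((g.1.2 - t - a : ℕ) : ℤ) = (g.1.2 : ℤ) - t - a := by omega
    rw [c1, c2]
    ring
  have RHS : ∀ t ∈ Finset.range (g.1.2 + 1),
      vq ^ ((1 - (ω g.1.1 : ℤ)) * (t : ℤ) * ((g.1.2 : ℤ) - (t : ℤ))) *
        Dw ω e (mkw0 ω g t) (fun r => G (r.1, r.2, mkw0 ω g (g.1.2 - t))) =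
      ∑ a ∈ Finset.range (t + 1),
        (fun x y z : ℕ => vq ^ ((1 - (ω g.1.1 : ℤ)) *
            ((x : ℤ) * y + (x : ℤ) * z + (y : ℤ) * z)) *
          G (mkw0 ω g x, mkw0 ω g y, mkw0 ω g z)) a (t - a) (g.1.2 - t) := by
    intro t ht
    have ht' : t ≤ g.1.2 := Nat.le_of_lt_succ (Finset.mem_range.mp ht)
    rw [Dw_mkw0 e g ht', Finset.mul_sum]
    refine Finset.sum_congr rfl fun a ha => ?_
    have ha' : a ≤ t := Nat.le_of_lt_succ (Finset.mem_range.mp ha)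
    simp only
    rw [← mul_assoc, ← zpow_add₀ vq_ne_zero]
    congr 2
    have c1 : ((t - a : ℕ) : ℤ) = (t : ℤ) - a := by omega
    have c2 : ((g.1.2 - t : ℕ) : ℤ) = (g.1.2 : ℤ) - t := by omega
    rw [c1, c2]
    ring
  rw [Finset.sum_congr rfl LHS, Finset.sum_congr rfl RHS]
  exact triangle_reindex g.1.2 (fun x y z =>
    vq ^ ((1 - (ω g.1.1 : ℤ)) * ((x : ℤ) * y + (x : ℤ) * z + (y : ℤ) * z)) *
      G (mkw0 ω g x, mkw0 ω g y, mkw0 ω g z))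


/-- general coassociativity, evaluated form -/
lemma coa (hsym : ∀ i j, e i j = e j i) (w : List (GenI ω))
    (k : List (GenI ω) × List (GenI ω) × List (GenI ω) → Kv) :
    Dw ω e w (fun p => Dw ω e p.2 (fun r => k (p.1, r.1, r.2)))
    = Dw ω e w (fun p => Dw ω e p.1 (fun r => k (r.1, r.2, p.2))) := by
  induction w generalizing k with
  | nil => simp only [Dw_nil]
  | cons g w ih =>
    rw [Dw_cons, Dw_cons]
    calc (lsum (deltaGen ω g) fun p => Dw ω e w fun q =>
            vq ^ (eWt ω e p.2 q.1) * Dw ω e (p.2 ++ q.2) (fun r => k (p.1 ++ q.1, r.1, r.2)))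
        = lsum (deltaGen ω g) fun p => Dw ω e p.2 fun r => Dw ω e w fun q =>
            Dw ω e q.2 fun s =>
              vq ^ (eWt ω e r.1 q.1) * (vq ^ (eWt ω e r.2 q.1) * (vq ^ (eWt ω e r.2 s.1) *
                k (p.1 ++ q.1, r.1 ++ s.1, r.2 ++ s.2))) := by
          refine lsum_congr fun p _ => ?_
          calc Dw ω e w (fun q => vq ^ (eWt ω e p.2 q.1) *
                  Dw ω e (p.2 ++ q.2) (fun r => k (p.1 ++ q.1, r.1, r.2)))
              = Dw ω e w (fun q => Dw ω e p.2 (fun r => Dw ω e q.2 (fun s =>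
                  vq ^ (eWt ω e p.2 q.1) * (vq ^ (eWt ω e r.2 s.1) *
                    k (p.1 ++ q.1, r.1 ++ s.1, r.2 ++ s.2))))) := by
                refine congrArg (Dw ω e w) (funext fun q => ?_)
                rw [Dw_append, Dw_const_mul]
                refine congrArg (Dw ω e p.2) (funext fun r => ?_)
                rw [Dw_const_mul]
            _ = Dw ω e p.2 (fun r => Dw ω e w (fun q => Dw ω e q.2 (fun s =>
                  vq ^ (eWt ω e p.2 q.1) * (vq ^ (eWt ω e r.2 s.1) *
                    k (p.1 ++ q.1, r.1 ++ s.1, r.2 ++ s.2))))) := Dw_swap e w p.2 _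
            _ = Dw ω e p.2 (fun r => Dw ω e w (fun q => Dw ω e q.2 (fun s =>
                  vq ^ (eWt ω e r.1 q.1) * (vq ^ (eWt ω e r.2 q.1) * (vq ^ (eWt ω e r.2 s.1) *
                    k (p.1 ++ q.1, r.1 ++ s.1, r.2 ++ s.2)))))) := by
                refine Dw_congr e fun r _ _ hr => ?_
                refine congrArg (Dw ω e w) (funext fun q => ?_)
                refine congrArg (Dw ω e q.2) (funext fun s => ?_)
                have hw : wtw ω p.2 = wtw ω (r.1 ++ r.2) := funext fun i => by
                  rw [wtw_append]; have := hr i; omega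
                rw [eWt_congr_left ω e q.1 hw, eWt_append_left, zpow_add₀ vq_ne_zero]
                ring
      _ = lsum (deltaGen ω g) fun p => Dw ω e p.2 fun r => Dw ω e w fun q =>
            Dw ω e q.1 fun s =>
              vq ^ (eWt ω e r.1 s.1) * (vq ^ (eWt ω e r.2 s.1) * (vq ^ (eWt ω e r.2 s.2) *
                k (p.1 ++ s.1, r.1 ++ s.2, r.2 ++ q.2))) := by
          refine lsum_congr fun p _ => congrArg (Dw ω e p.2) (funext fun r => ?_)
          exact ih (fun x => vq ^ (eWt ω e r.1 x.1) * (vq ^ (eWt ω e r.2 x.1) *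
            (vq ^ (eWt ω e r.2 x.2.1) * k (p.1 ++ x.1, r.1 ++ x.2.1, r.2 ++ x.2.2))))
      _ = lsum (deltaGen ω g) fun p => Dw ω e p.1 fun r => Dw ω e w fun q =>
            Dw ω e q.1 fun s =>
              vq ^ (eWt ω e r.2 s.1) * (vq ^ (eWt ω e p.2 s.1) * (vq ^ (eWt ω e p.2 s.2) *
                k (r.1 ++ s.1, r.2 ++ s.2, p.2 ++ q.2))) :=
          coa_gen e g (fun x => Dw ω e w fun q => Dw ω e q.1 fun s =>
            vq ^ (eWt ω e x.2.1 s.1) * (vq ^ (eWt ω e x.2.2 s.1) * (vq ^ (eWt ω e x.2.2 s.2) *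
              k (x.1 ++ s.1, x.2.1 ++ s.2, x.2.2 ++ q.2))))
      _ = lsum (deltaGen ω g) fun p => Dw ω e p.1 fun r => Dw ω e w fun q =>
            Dw ω e q.1 fun s =>
              vq ^ (eWt ω e p.2 q.1) * (vq ^ (eWt ω e r.2 s.1) *
                k (r.1 ++ s.1, r.2 ++ s.2, p.2 ++ q.2)) := by
          refine lsum_congr fun p _ => congrArg (Dw ω e p.1) (funext fun r =>
            congrArg (Dw ω e w) (funext fun q => ?_))
          refine (Dw_congr e fun s _ _ hs => ?_).symm
          have hw : wtw ω q.1 = wtw ω (s.1 ++ s.2) := funext fun i => by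
            rw [wtw_append]; have := hs i; omega
          rw [eWt_congr_right ω e hsym p.2 hw, eWt_append_right, zpow_add₀ vq_ne_zero]
          ring
      _ = (lsum (deltaGen ω g) fun p => Dw ω e w fun q =>
            vq ^ (eWt ω e p.2 q.1) * Dw ω e (p.1 ++ q.1) (fun r => k (r.1, r.2, p.2 ++ q.2))) := by
          refine (lsum_congr fun p _ => ?_).symm
          calc Dw ω e w (fun q => vq ^ (eWt ω e p.2 q.1) *
                  Dw ω e (p.1 ++ q.1) (fun r => k (r.1, r.2, p.2 ++ q.2)))
              = Dw ω e w (fun q => Dw ω e p.1 (fun r => Dw ω e q.1 (fun s =>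
                  vq ^ (eWt ω e p.2 q.1) * (vq ^ (eWt ω e r.2 s.1) *
                    k (r.1 ++ s.1, r.2 ++ s.2, p.2 ++ q.2))))) := by
                refine congrArg (Dw ω e w) (funext fun q => ?_)
                rw [Dw_append, Dw_const_mul]
                refine congrArg (Dw ω e p.1) (funext fun r => ?_)
                rw [Dw_const_mul]
            _ = Dw ω e p.1 (fun r => Dw ω e w (fun q => Dw ω e q.1 (fun s =>
                  vq ^ (eWt ω e p.2 q.1) * (vq ^ (eWt ω e r.2 s.1) *
                    k (r.1 ++ s.1, r.2 ++ s.2, p.2 ++ q.2))))) := Dw_swap e w p.1 _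


/-! ### the pairing on words, by fuelled recursion -/

variable (ω) in
def pairF (e : I → I → ℤ) (ν : GenI ω → Kv) :
    ℕ → List (GenI ω) → List (GenI ω) → Kv
  | 0, _, _ => 0
  | _ + 1, [], [] => 1
  | _ + 1, [], _ :: _ => 0
  | _ + 1, [_], [] => 0
  | _ + 1, [g], [g'] => if g = g' then ν g else 0
  | n + 1, [g], c :: b :: t =>
      lsum (deltaGen ω g) fun p => pairF e ν n p.1 [c] * pairF e ν n p.2 (b :: t)
  | _ + 1, _ :: _ :: _, [] => 0
  | n + 1, g :: a :: u, c :: w'' =>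
      lsum (deltaWord ω e (c :: w'')) fun p =>
        pairF e ν n [g] p.1 * pairF e ν n (a :: u) p.2

variable (ν : GenI ω → Kv)

lemma pairF_stab (N : ℕ) : ∀ m n (w w' : List (GenI ω)),
    w.length + w'.length < m → w.length + w'.length < n → w.length + w'.length ≤ N →
    pairF ω e ν m w w' = pairF ω e ν n w w' := by
  induction N with
  | zero =>
    intro m n w w' hm hn hN
    have hw : w = [] := List.length_eq_zero_iff.mp (by omega)
    have hw' : w' = [] := List.length_eq_zero_iff.mp (by omega)
    subst hw hw'
    cases m with
    | zero => omega
    | succ m =>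
      cases n with
      | zero => omega
      | succ n => rfl
  | succ N ih =>
    intro m n w w' hm hn hN
    cases m with
    | zero => omega
    | succ m =>
    cases n with
    | zero => omega
    | succ n =>
    cases w with
    | nil =>
      cases w' with
      | nil => rfl
      | cons c w'' => rfl
    | cons g w0 =>
      cases w0 with
      | nil =>
        cases w' with
        | nil => rfl
        | cons c w1 =>
          cases w1 with
          | nil => rfl
          | cons b t =>
            show lsum (deltaGen ω g) _ = lsum (deltaGen ω g) _
            refine lsum_congr fun p hp => ?_
            obtain ⟨t', ht', hpe⟩ := support_deltaGen hp
            have l1 : p.1.length ≤ 1 := by rw [hpe]; exact mkw0_length g t'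
            have l2 : p.2.length ≤ 1 := by rw [hpe]; exact mkw0_length g _
            simp only [List.length_cons, List.length_singleton, List.length_nil] at hm hn hN
            exact congrArg₂ (· * ·)
              (ih m n p.1 [c] (by simp; omega) (by simp; omega) (by simp; omega))
              (ih m n p.2 (b :: t) (by simp; omega) (by simp; omega) (by simp; omega))
      | cons a u =>
        cases w' with
        | nil => rfl
        | cons c w'' =>
          show lsum (deltaWord ω e (c :: w'')) _ = lsum (deltaWord ω e (c :: w'')) _
          refine lsum_congr fun p hp => ?_
          obtain ⟨l1, l2, _⟩ := support_deltaWord e hp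
          simp only [List.length_cons] at l1 l2 hm hn hN
          exact congrArg₂ (· * ·)
            (ih m n [g] p.1 (by simp; omega) (by simp; omega) (by simp; omega))
            (ih m n (a :: u) p.2 (by simp; omega) (by simp; omega) (by simp; omega))

variable (ω) in
def pair (w w' : List (GenI ω)) : Kv :=
  pairF ω e ν (w.length + w'.length + 1) w w'

lemma pairF_eq_pair {n : ℕ} {w w' : List (GenI ω)} (h : w.length + w'.length < n) :
    pairF ω e ν n w w' = pair ω e ν w w' :=
  pairF_stab e ν (w.length + w'.length) n _ w w' h (by omega) le_rfl

@[simp] lemma pair_nil_nil : pair ω e ν [] [] = 1 := rfl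

@[simp] lemma pair_nil_cons (c : GenI ω) (w' : List (GenI ω)) : pair ω e ν [] (c :: w') = 0 := rfl

@[simp] lemma pair_single_nil (g : GenI ω) : pair ω e ν [g] [] = 0 := rfl

lemma pair_single_single (g g' : GenI ω) :
    pair ω e ν [g] [g'] = if g = g' then ν g else 0 := rfl

lemma pair_nil_left (w' : List (GenI ω)) : pair ω e ν [] w' = e0 w' := by
  cases w' <;> simp [e0]

lemma pair_nil_right (w : List (GenI ω)) : pair ω e ν w [] = e0 w := by
  match w with
  | [] => simp [e0]
  | [g] => simp [e0]
  | g :: a :: u => show (0 : Kv) = _ ; simp [e0]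

lemma pair_single_long (g c b : GenI ω) (t : List (GenI ω)) :
    pair ω e ν [g] (c :: b :: t) =
      lsum (deltaGen ω g) fun p => pair ω e ν p.1 [c] * pair ω e ν p.2 (b :: t) := by
  show lsum (deltaGen ω g) _ = _
  refine lsum_congr fun p hp => ?_
  obtain ⟨t', ht', hpe⟩ := support_deltaGen hp
  have l1 : p.1.length ≤ 1 := by rw [hpe]; exact mkw0_length g t'
  have l2 : p.2.length ≤ 1 := by rw [hpe]; exact mkw0_length g _
  exact congrArg₂ (· * ·)
    (pairF_eq_pair e ν (by simp; omega)) (pairF_eq_pair e ν (by simp; omega))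

lemma pair_long (g a c : GenI ω) (u w'' : List (GenI ω)) :
    pair ω e ν (g :: a :: u) (c :: w'') =
      lsum (deltaWord ω e (c :: w'')) fun p =>
        pair ω e ν [g] p.1 * pair ω e ν (a :: u) p.2 := by
  show lsum (deltaWord ω e (c :: w'')) _ = _
  refine lsum_congr fun p hp => ?_
  obtain ⟨l1, l2, _⟩ := support_deltaWord e hp
  simp only [List.length_cons] at l1 l2
  exact congrArg₂ (· * ·)
    (pairF_eq_pair e ν (by simp; omega)) (pairF_eq_pair e ν (by simp; omega))


lemma lsum_zero_fun {α : Type*} (f : α →₀ Kv) : lsum f (fun _ => 0) = 0 := by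
  simp [lsum, Finsupp.sum]

lemma lsum_eq_zero {α : Type*} {f : α →₀ Kv} {k : α → Kv}
    (h : ∀ p ∈ f.support, k p = 0) : lsum f k = 0 :=
  (lsum_congr h).trans (lsum_zero_fun f)

lemma lsum_mul_const {α : Type*} (c : Kv) (f : α →₀ Kv) (k : α → Kv) :
    lsum f k * c = lsum f (fun p => k p * c) := by
  unfold lsum Finsupp.sum
  rw [Finset.sum_mul]
  exact Finset.sum_congr rfl fun p _ => by ring

lemma lsum_mul_lsum {α β : Type*} (f : α →₀ Kv) (g : β →₀ Kv) (k1 : α → Kv) (k2 : β → Kv) :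
    lsum f k1 * lsum g k2 = lsum f (fun p => lsum g (fun q => k1 p * k2 q)) := by
  unfold lsum Finsupp.sum
  beta_reduce
  rw [Finset.sum_mul_sum]
  refine Finset.sum_congr rfl fun p _ => ?_
  rw [Finset.mul_sum]
  exact Finset.sum_congr rfl fun q _ => by ring

lemma Dw_mul_const (c : Kv) (w : List (GenI ω)) (k : List (GenI ω) × List (GenI ω) → Kv) :
    Dw ω e w k * c = Dw ω e w (fun p => k p * c) :=
  lsum_mul_const c _ k

/-! ### weight vanishing -/

lemma pair_wt_aux (N : ℕ) : ∀ w w' : List (GenI ω), w.length + w'.length ≤ N →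
    wtw ω w ≠ wtw ω w' → pair ω e ν w w' = 0 := by
  induction N with
  | zero =>
    intro w w' hN h
    have hw : w = [] := List.length_eq_zero_iff.mp (by omega)
    have hw' : w' = [] := List.length_eq_zero_iff.mp (by omega)
    subst hw hw'
    exact absurd rfl h
  | succ N ih =>
    intro w w' hN h
    cases w with
    | nil =>
      cases w' with
      | nil => exact absurd rfl h
      | cons c w'' => rfl
    | cons g w0 =>
      cases w0 with
      | nil =>
        cases w' with
        | nil => rfl
        | cons c w1 =>
          cases w1 with
          | nil =>
            rw [pair_single_single]
            rw [if_neg]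
            intro hgc
            subst hgc
            exact h rfl
          | cons b t =>
            rw [pair_single_long]
            refine lsum_eq_zero fun p hp => ?_
            obtain ⟨t', ht', hpe⟩ := support_deltaGen hp
            have l1 : p.1.length ≤ 1 := by rw [hpe]; exact mkw0_length g t'
            have l2 : p.2.length ≤ 1 := by rw [hpe]; exact mkw0_length g _
            have hwt : ∀ i, wtw ω p.1 i + wtw ω p.2 i = wtw ω [g] i := by
              intro i
              rw [hpe]
              simp only
              rw [wtw_mkw0 g ht' i, wtw_mkw0 g (Nat.sub_le _ _) i, wtw_single]
              split <;> omega
            simp only [List.length_cons, List.length_singleton, List.length_nil] at hN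
            by_contra hne
            have h1 : pair ω e ν p.1 [c] ≠ 0 := fun hh => hne (by rw [hh, zero_mul])
            have h2 : pair ω e ν p.2 (b :: t) ≠ 0 := fun hh => hne (by rw [hh, mul_zero])
            have e1 : wtw ω p.1 = wtw ω [c] := by
              by_contra hc
              exact h1 (ih p.1 [c] (by simp; omega) hc)
            have e2 : wtw ω p.2 = wtw ω (b :: t) := by
              by_contra hc
              exact h2 (ih p.2 (b :: t) (by simp; omega) hc)
            refine h (funext fun i => ?_)
            have h4 := hwt i
            rw [e1, e2] at h4
            have h5 : wtw ω (c :: b :: t) i = wtw ω [c] i + wtw ω (b :: t) i :=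
              wtw_append ω [c] (b :: t) i
            show wtw ω [g] i = wtw ω (c :: b :: t) i
            omega
      | cons a u =>
        cases w' with
        | nil => rfl
        | cons c w'' =>
          rw [pair_long]
          refine lsum_eq_zero fun p hp => ?_
          obtain ⟨l1, l2, hwt⟩ := support_deltaWord e hp
          simp only [List.length_cons] at l1 l2 hN
          by_contra hne
          have h1 : pair ω e ν [g] p.1 ≠ 0 := fun hh => hne (by rw [hh, zero_mul])
          have h2 : pair ω e ν (a :: u) p.2 ≠ 0 := fun hh => hne (by rw [hh, mul_zero])
          have e1 : wtw ω [g] = wtw ω p.1 := by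
            by_contra hc
            exact h1 (ih [g] p.1 (by simp; omega) hc)
          have e2 : wtw ω (a :: u) = wtw ω p.2 := by
            by_contra hc
            exact h2 (ih (a :: u) p.2 (by simp; omega) hc)
          refine h (funext fun i => ?_)
          have h3 := hwt i
          rw [← e1, ← e2] at h3
          rw [show wtw ω (g :: a :: u) i = wtw ω [g] i + wtw ω (a :: u) i from
            wtw_append ω [g] (a :: u) i]
          omega

lemma pair_wt {w w' : List (GenI ω)} (h : wtw ω w ≠ wtw ω w') : pair ω e ν w w' = 0 :=
  pair_wt_aux e ν (w.length + w'.length) w w' le_rfl h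

lemma pair_wt' {w w' : List (GenI ω)} (h : pair ω e ν w w' ≠ 0) : wtw ω w = wtw ω w' := by
  by_contra hc
  exact h (pair_wt e ν hc)

/-! ### left Hopf identity -/

lemma pair_cons_expand (g a : GenI ω) (u1 x : List (GenI ω)) :
    pair ω e ν (g :: a :: u1) x =
      Dw ω e x (fun r => pair ω e ν [g] r.1 * pair ω e ν (a :: u1) r.2) := by
  cases x with
  | nil =>
    rw [Dw_nil]
    show (0 : Kv) = _
    simp
  | cons c w'' => exact pair_long e ν g a c u1 w''

lemma pair_hl (hsym : ∀ i j, e i j = e j i) :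
    ∀ u w w' : List (GenI ω), pair ω e ν (u ++ w) w' =
      Dw ω e w' (fun p => pair ω e ν u p.1 * pair ω e ν w p.2) := by
  intro u
  induction u with
  | nil =>
    intro w w'
    rw [List.nil_append]
    rw [show (fun p : List (GenI ω) × List (GenI ω) =>
        pair ω e ν [] p.1 * pair ω e ν w p.2) =
      (fun p => e0 p.1 * (fun x => pair ω e ν w x) p.2) from
        funext fun p => by rw [pair_nil_left]]
    rw [Dw_counit_left]
  | cons g u0 ih =>
    intro w w'
    cases u0 with
    | nil =>
      cases w with
      | nil =>
        rw [List.append_nil]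
        rw [show (fun p : List (GenI ω) × List (GenI ω) =>
            pair ω e ν [g] p.1 * pair ω e ν [] p.2) =
          (fun p => (fun x => pair ω e ν [g] x) p.1 * e0 p.2) from
            funext fun p => by rw [pair_nil_left]]
        rw [Dw_counit_right]
      | cons b t => exact pair_cons_expand e ν g b t w'
    | cons a u1 =>
      show pair ω e ν (g :: ((a :: u1) ++ w)) w' = _
      rw [show g :: ((a :: u1) ++ w) = g :: a :: (u1 ++ w) from rfl]
      rw [pair_cons_expand e ν g a (u1 ++ w) w']
      calc Dw ω e w' (fun r => pair ω e ν [g] r.1 * pair ω e ν (a :: u1 ++ w) r.2)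
          = Dw ω e w' (fun r => Dw ω e r.2 (fun s =>
              pair ω e ν [g] r.1 * (pair ω e ν (a :: u1) s.1 * pair ω e ν w s.2))) := by
            refine congrArg (Dw ω e w') (funext fun r => ?_)
            rw [show (a :: u1 ++ w : List (GenI ω)) = (a :: u1) ++ w from rfl, ih]
            rw [Dw_const_mul]
        _ = Dw ω e w' (fun r => Dw ω e r.1 (fun s =>
              pair ω e ν [g] s.1 * (pair ω e ν (a :: u1) s.2 * pair ω e ν w r.2))) :=
            coa e hsym w' (fun x => pair ω e ν [g] x.1 *
              (pair ω e ν (a :: u1) x.2.1 * pair ω e ν w x.2.2))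
        _ = Dw ω e w' (fun p => pair ω e ν (g :: a :: u1) p.1 * pair ω e ν w p.2) := by
            refine congrArg (Dw ω e w') (funext fun p => ?_)
            rw [pair_cons_expand e ν g a u1 p.1, Dw_mul_const]
            exact congrArg (Dw ω e p.1) (funext fun s => by ring)


lemma Dw_mul_Dw (w1 w2 : List (GenI ω)) (k1 k2 : List (GenI ω) × List (GenI ω) → Kv) :
    Dw ω e w1 k1 * Dw ω e w2 k2 =
      Dw ω e w1 (fun p => Dw ω e w2 (fun q => k1 p * k2 q)) :=
  lsum_mul_lsum _ _ k1 k2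

lemma lsum_mul_Dw {α : Type*} (f : α →₀ Kv) (k1 : α → Kv) (w2 : List (GenI ω))
    (k2 : List (GenI ω) × List (GenI ω) → Kv) :
    lsum f k1 * Dw ω e w2 k2 = lsum f (fun p => Dw ω e w2 (fun q => k1 p * k2 q)) :=
  lsum_mul_lsum _ _ k1 k2

/-! ### right Hopf identity -/

lemma pair_hr (hsym : ∀ i j, e i j = e j i) (N : ℕ) :
    ∀ w u w' : List (GenI ω), w.length + u.length + w'.length ≤ N →
      pair ω e ν w (u ++ w') = Dw ω e w (fun p => pair ω e ν p.1 u * pair ω e ν p.2 w') := by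
  induction N with
  | zero =>
    intro w u w' hN
    have h1 : w = [] := List.length_eq_zero_iff.mp (by omega)
    have h2 : u = [] := List.length_eq_zero_iff.mp (by omega)
    have h3 : w' = [] := List.length_eq_zero_iff.mp (by omega)
    subst h1 h2 h3
    rw [Dw_nil]
    show (1 : Kv) = 1 * 1
    rw [one_mul]
  | succ N ih =>
    intro w u w' hN
    cases w' with
    | nil =>
      rw [List.append_nil]
      rw [show (fun p : List (GenI ω) × List (GenI ω) =>
          pair ω e ν p.1 u * pair ω e ν p.2 []) =
        (fun p => (fun x => pair ω e ν x u) p.1 * e0 p.2) from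
          funext fun p => by rw [pair_nil_right]]
      exact (Dw_counit_right e w (fun x => pair ω e ν x u)).symm
    | cons b t =>
      cases w with
      | nil =>
        rw [Dw_nil]
        show pair ω e ν [] (u ++ b :: t) = pair ω e ν [] u * pair ω e ν [] (b :: t)
        rw [pair_nil_left, pair_nil_left, pair_nil_left, e0_append, e0_cons, mul_zero]
      | cons g w0 =>
        cases w0 with
        | nil =>
          -- w = [g]
          cases u with
          | nil =>
            rw [List.nil_append]
            rw [show (fun p : List (GenI ω) × List (GenI ω) =>
                pair ω e ν p.1 [] * pair ω e ν p.2 (b :: t)) =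
              (fun p => e0 p.1 * (fun x => pair ω e ν x (b :: t)) p.2) from
                funext fun p => by rw [pair_nil_right]]
            exact (Dw_counit_left e [g] (fun x => pair ω e ν x (b :: t))).symm
          | cons c u1 =>
            cases u1 with
            | nil =>
              show pair ω e ν [g] (c :: b :: t) = _
              rw [pair_single_long, Dw_single]
            | cons d u2 =>
              -- u = c :: d :: u2
              simp only [List.length_cons, List.length_singleton] at hN
              show pair ω e ν [g] (c :: d :: (u2 ++ b :: t)) = _
              rw [pair_single_long, Dw_single]
              calc (lsum (deltaGen ω g) fun p =>
                      pair ω e ν p.1 [c] * pair ω e ν p.2 (d :: (u2 ++ b :: t)))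
                  = lsum (deltaGen ω g) fun p =>
                      pair ω e ν p.1 [c] * Dw ω e p.2 (fun r =>
                        pair ω e ν r.1 (d :: u2) * pair ω e ν r.2 (b :: t)) := by
                    refine lsum_congr fun p hp => ?_
                    obtain ⟨t', ht', hpe⟩ := support_deltaGen hp
                    have l2 : p.2.length ≤ 1 := by rw [hpe]; exact mkw0_length g _
                    rw [show (d :: (u2 ++ b :: t) : List (GenI ω)) = (d :: u2) ++ (b :: t)
                      from rfl, ih p.2 (d :: u2) (b :: t) (by simp; omega)]
                _ = lsum (deltaGen ω g) fun p => Dw ω e p.2 (fun r =>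
                      pair ω e ν p.1 [c] * (pair ω e ν r.1 (d :: u2) *
                        pair ω e ν r.2 (b :: t))) := by
                    refine lsum_congr fun p _ => ?_
                    rw [Dw_const_mul]
                _ = lsum (deltaGen ω g) fun p => Dw ω e p.1 (fun r =>
                      pair ω e ν r.1 [c] * (pair ω e ν r.2 (d :: u2) *
                        pair ω e ν p.2 (b :: t))) :=
                    coa_gen e g (fun x => pair ω e ν x.1 [c] *
                      (pair ω e ν x.2.1 (d :: u2) * pair ω e ν x.2.2 (b :: t)))
                _ = lsum (deltaGen ω g) fun p => Dw ω e p.1 (fun r =>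
                      pair ω e ν r.1 [c] * pair ω e ν r.2 (d :: u2)) *
                        pair ω e ν p.2 (b :: t) := by
                    refine lsum_congr fun p _ => ?_
                    rw [Dw_mul_const]
                    exact congrArg (Dw ω e p.1) (funext fun r => by ring)
                _ = lsum (deltaGen ω g) fun p =>
                      pair ω e ν p.1 (c :: d :: u2) * pair ω e ν p.2 (b :: t) := by
                    refine lsum_congr fun p hp => ?_
                    obtain ⟨t', ht', hpe⟩ := support_deltaGen hp
                    have l1 : p.1.length ≤ 1 := by rw [hpe]; exact mkw0_length g t'
                    rw [show (c :: d :: u2 : List (GenI ω)) = [c] ++ (d :: u2) from rfl,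
                      ih p.1 [c] (d :: u2) (by simp; omega)]
        | cons a u0 =>
          -- w = g :: a :: u0
          cases u with
          | nil =>
            rw [List.nil_append]
            rw [show (fun p : List (GenI ω) × List (GenI ω) =>
                pair ω e ν p.1 [] * pair ω e ν p.2 (b :: t)) =
              (fun p => e0 p.1 * (fun x => pair ω e ν x (b :: t)) p.2) from
                funext fun p => by rw [pair_nil_right]]
            exact (Dw_counit_left e (g :: a :: u0) (fun x => pair ω e ν x (b :: t))).symm
          | cons c u'' =>
            simp only [List.length_cons] at hN
            rw [pair_cons_expand e ν g a u0 ((c :: u'') ++ (b :: t))]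
            calc Dw ω e ((c :: u'') ++ (b :: t)) (fun r =>
                    pair ω e ν [g] r.1 * pair ω e ν (a :: u0) r.2)
                = Dw ω e (c :: u'') fun p => Dw ω e (b :: t) fun q =>
                    vq ^ (eWt ω e p.2 q.1) * (pair ω e ν [g] (p.1 ++ q.1) *
                      pair ω e ν (a :: u0) (p.2 ++ q.2)) :=
                  Dw_append e (c :: u'') (b :: t) _
              _ = Dw ω e (c :: u'') fun p => Dw ω e (b :: t) fun q =>
                    vq ^ (eWt ω e p.2 q.1) *
                      (Dw ω e [g] (fun r => pair ω e ν r.1 p.1 * pair ω e ν r.2 q.1) *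
                       Dw ω e (a :: u0) (fun s =>
                         pair ω e ν s.1 p.2 * pair ω e ν s.2 q.2)) := by
                  refine Dw_congr e fun p hp1 hp2 _ => ?_
                  refine Dw_congr e fun q hq1 hq2 _ => ?_
                  simp only [List.length_cons] at hp1 hp2 hq1 hq2
                  rw [ih [g] p.1 q.1 (by simp; omega),
                    ih (a :: u0) p.2 q.2 (by simp; omega)]
              _ = Dw ω e (c :: u'') fun p => Dw ω e (b :: t) fun q =>
                    lsum (deltaGen ω g) fun r => Dw ω e (a :: u0) fun s =>
                      vq ^ (eWt ω e p.2 q.1) *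
                        ((pair ω e ν r.1 p.1 * pair ω e ν r.2 q.1) *
                         (pair ω e ν s.1 p.2 * pair ω e ν s.2 q.2)) := by
                  refine congrArg (Dw ω e (c :: u'')) (funext fun p => ?_)
                  refine congrArg (Dw ω e (b :: t)) (funext fun q => ?_)
                  rw [Dw_single, lsum_mul_Dw, lsum_const_mul]
                  refine congrArg (lsum (deltaGen ω g)) (funext fun r => ?_)
                  rw [Dw_const_mul]
              _ = lsum (deltaGen ω g) fun r => Dw ω e (a :: u0) fun s =>
                    Dw ω e (c :: u'') fun p => Dw ω e (b :: t) fun q =>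
                      vq ^ (eWt ω e p.2 q.1) *
                        ((pair ω e ν r.1 p.1 * pair ω e ν r.2 q.1) *
                         (pair ω e ν s.1 p.2 * pair ω e ν s.2 q.2)) := by
                  calc Dw ω e (c :: u'') (fun p => Dw ω e (b :: t) fun q =>
                          lsum (deltaGen ω g) fun r => Dw ω e (a :: u0) fun s =>
                            vq ^ (eWt ω e p.2 q.1) *
                              ((pair ω e ν r.1 p.1 * pair ω e ν r.2 q.1) *
                               (pair ω e ν s.1 p.2 * pair ω e ν s.2 q.2)))
                      = Dw ω e (c :: u'') (fun p => lsum (deltaGen ω g) fun r =>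
                          Dw ω e (b :: t) fun q => Dw ω e (a :: u0) fun s =>
                            vq ^ (eWt ω e p.2 q.1) *
                              ((pair ω e ν r.1 p.1 * pair ω e ν r.2 q.1) *
                               (pair ω e ν s.1 p.2 * pair ω e ν s.2 q.2))) := by
                        refine congrArg (Dw ω e (c :: u'')) (funext fun p => ?_)
                        exact lsum_swap (deltaWord ω e (b :: t)) (deltaGen ω g) _
                    _ = lsum (deltaGen ω g) (fun r => Dw ω e (c :: u'') fun p =>
                          Dw ω e (b :: t) fun q => Dw ω e (a :: u0) fun s =>
                            vq ^ (eWt ω e p.2 q.1) *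
                              ((pair ω e ν r.1 p.1 * pair ω e ν r.2 q.1) *
                               (pair ω e ν s.1 p.2 * pair ω e ν s.2 q.2))) :=
                        lsum_swap (deltaWord ω e (c :: u'')) (deltaGen ω g) _
                    _ = lsum (deltaGen ω g) fun r => Dw ω e (c :: u'') fun p =>
                          Dw ω e (a :: u0) fun s => Dw ω e (b :: t) fun q =>
                            vq ^ (eWt ω e p.2 q.1) *
                              ((pair ω e ν r.1 p.1 * pair ω e ν r.2 q.1) *
                               (pair ω e ν s.1 p.2 * pair ω e ν s.2 q.2)) := by
                        refine lsum_congr fun r _ => ?_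
                        refine congrArg (Dw ω e (c :: u'')) (funext fun p => ?_)
                        exact lsum_swap (deltaWord ω e (b :: t)) (deltaWord ω e (a :: u0)) _
                    _ = lsum (deltaGen ω g) fun r => Dw ω e (a :: u0) fun s =>
                          Dw ω e (c :: u'') fun p => Dw ω e (b :: t) fun q =>
                            vq ^ (eWt ω e p.2 q.1) *
                              ((pair ω e ν r.1 p.1 * pair ω e ν r.2 q.1) *
                               (pair ω e ν s.1 p.2 * pair ω e ν s.2 q.2)) := by
                        refine lsum_congr fun r _ => ?_
                        exact lsum_swap (deltaWord ω e (c :: u'')) (deltaWord ω e (a :: u0)) _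
              _ = lsum (deltaGen ω g) fun r => Dw ω e (a :: u0) fun s =>
                    Dw ω e (c :: u'') fun p => Dw ω e (b :: t) fun q =>
                      vq ^ (eWt ω e r.2 s.1) *
                        ((pair ω e ν r.1 p.1 * pair ω e ν s.1 p.2) *
                         (pair ω e ν r.2 q.1 * pair ω e ν s.2 q.2)) := by
                  refine lsum_congr fun r _ => ?_
                  refine congrArg (Dw ω e (a :: u0)) (funext fun s => ?_)
                  refine congrArg (Dw ω e (c :: u'')) (funext fun p => ?_)
                  refine congrArg (Dw ω e (b :: t)) (funext fun q => ?_)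
                  by_cases h1 : pair ω e ν r.2 q.1 = 0
                  · rw [h1]; ring
                  by_cases h2 : pair ω e ν s.1 p.2 = 0
                  · rw [h2]; ring
                  have hw1 : wtw ω r.2 = wtw ω q.1 := pair_wt' e ν h1
                  have hw2 : wtw ω s.1 = wtw ω p.2 := pair_wt' e ν h2
                  rw [show eWt ω e r.2 s.1 = eWt ω e p.2 q.1 from by
                    rw [eWt_congr_left ω e s.1 hw1, eWt_congr_right ω e hsym q.1 hw2,
                      eWt_comm ω e hsym]]
                  ring
              _ = lsum (deltaGen ω g) fun r => Dw ω e (a :: u0) fun s =>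
                    vq ^ (eWt ω e r.2 s.1) *
                      (Dw ω e (c :: u'') (fun p =>
                          pair ω e ν r.1 p.1 * pair ω e ν s.1 p.2) *
                       Dw ω e (b :: t) (fun q =>
                          pair ω e ν r.2 q.1 * pair ω e ν s.2 q.2)) := by
                  refine lsum_congr fun r _ => ?_
                  refine congrArg (Dw ω e (a :: u0)) (funext fun s => ?_)
                  rw [Dw_mul_Dw, Dw_const_mul]
                  refine congrArg (Dw ω e (c :: u'')) (funext fun p => ?_)
                  rw [Dw_const_mul]
              _ = lsum (deltaGen ω g) fun r => Dw ω e (a :: u0) fun s =>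
                    vq ^ (eWt ω e r.2 s.1) *
                      (pair ω e ν (r.1 ++ s.1) (c :: u'') *
                       pair ω e ν (r.2 ++ s.2) (b :: t)) := by
                  refine lsum_congr fun r _ => ?_
                  refine congrArg (Dw ω e (a :: u0)) (funext fun s => ?_)
                  rw [pair_hl e ν hsym r.1 s.1 (c :: u''), pair_hl e ν hsym r.2 s.2 (b :: t)]
              _ = Dw ω e (g :: a :: u0) (fun p =>
                    pair ω e ν p.1 (c :: u'') * pair ω e ν p.2 (b :: t)) := by
                  rw [Dw_cons]


set_option synthInstance.maxHeartbeats 1000000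
set_option maxHeartbeats 1600000

/-! ### the bilinear form -/

variable (ω) in
def rowB (e : I → I → ℤ) (ν : GenI ω → Kv) (w : FreeMonoid (GenI ω)) : FA ω →ₗ[Kv] Kv :=
  (Finsupp.lsum Kv fun w' => LinearMap.toSpanSingleton Kv Kv
    (pair ω e ν (FreeMonoid.toList w) (FreeMonoid.toList w'))) ∘ₗ
    (MonoidAlgebra.coeffLinearEquiv Kv).toLinearMap

variable (ω) in
def Bform (e : I → I → ℤ) (ν : GenI ω → Kv) : FA ω →ₗ[Kv] FA ω →ₗ[Kv] Kv :=
  (Finsupp.lsum Kv fun w => LinearMap.toSpanSingleton Kv (FA ω →ₗ[Kv] Kv) (rowB ω e ν w)) ∘ₗ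
    (MonoidAlgebra.coeffLinearEquiv Kv).toLinearMap

lemma Bform_single (m m' : FreeMonoid (GenI ω)) (c c' : Kv) :
    Bform ω e ν (MonoidAlgebra.single m c) (MonoidAlgebra.single m' c') =
      c * c' * pair ω e ν (FreeMonoid.toList m) (FreeMonoid.toList m') := by
  simp only [Bform, rowB, LinearMap.comp_apply, LinearEquiv.coe_coe,
    MonoidAlgebra.coeffLinearEquiv_apply, MonoidAlgebra.coeff_single, Finsupp.lsum_single,
    LinearMap.toSpanSingleton_apply, LinearMap.smul_apply, smul_eq_mul]
  ring

lemma Bform_sw (u w' : List (GenI ω)) :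
    Bform ω e ν (sw ω u) (sw ω w') = pair ω e ν u w' := by
  unfold sw
  rw [Bform_single]
  rw [FreeMonoid.toList_ofList, FreeMonoid.toList_ofList, one_mul, one_mul]

lemma sw_nil_eq_one : sw ω [] = (1 : FA ω) := by
  rw [MonoidAlgebra.one_def]
  rfl

lemma sw_mul (u w : List (GenI ω)) : sw ω u * sw ω w = sw ω (u ++ w) := by
  unfold sw
  rw [MonoidAlgebra.single_mul_single, one_mul]
  rfl

/-! ### deltaF lemmas -/

lemma deltaF_zero : deltaF ω e 0 = 0 := by
  unfold deltaF
  rw [MonoidAlgebra.coeff_zero]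
  exact Finsupp.sum_zero_index

lemma deltaF_add (c1 c2 : FA ω) : deltaF ω e (c1 + c2) = deltaF ω e c1 + deltaF ω e c2 := by
  unfold deltaF
  rw [MonoidAlgebra.coeff_add]
  exact Finsupp.sum_add_index' (fun _ => zero_smul _ _) (fun _ _ _ => add_smul _ _ _)

lemma deltaF_single' (m : FreeMonoid (GenI ω)) (b : Kv) :
    deltaF ω e (MonoidAlgebra.single m b) = b • deltaWord ω e (FreeMonoid.toList m) := by
  unfold deltaF
  rw [MonoidAlgebra.coeff_single]
  exact Finsupp.sum_single_index (zero_smul _ _)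

lemma deltaF_smul (a : Kv) (c : FA ω) : deltaF ω e (a • c) = a • deltaF ω e c := by
  induction c using MonoidAlgebra.induction_linear with
  | zero => rw [smul_zero, deltaF_zero, smul_zero]
  | add f g hf hg => rw [smul_add, deltaF_add, deltaF_add, hf, hg, smul_add]
  | single m b =>
    have h1 : a • (MonoidAlgebra.single m b : FA ω) = MonoidAlgebra.single m (a * b) := by
      rw [MonoidAlgebra.smul_single']
    rw [h1, deltaF_single', deltaF_single', smul_smul]

lemma deltaF_sw (w : List (GenI ω)) : deltaF ω e (sw ω w) = deltaWord ω e w := by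
  show deltaF ω e (MonoidAlgebra.single (FreeMonoid.ofList w) 1) = _
  rw [deltaF_single', one_smul, FreeMonoid.toList_ofList]

lemma deltaWord_one (g : GenI ω) : deltaWord ω e [g] = deltaGen ω g := by
  show tmul ω e (deltaGen ω g) (Finsupp.single ([], []) 1) = deltaGen ω g
  unfold tmul
  have step : ∀ p ∈ (deltaGen ω g).support,
      ((Finsupp.single ([], []) (1 : Kv)).sum fun q b =>
        Finsupp.single (p.1 ++ q.1, p.2 ++ q.2) ((deltaGen ω g) p * b * vq ^ eWt ω e p.2 q.1))
      = Finsupp.single p ((deltaGen ω g) p) := by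
    intro p _
    rw [Finsupp.sum_single_index (by simp)]
    rw [eWt_nil_right, zpow_zero, mul_one, mul_one, List.append_nil, List.append_nil]
  exact (Finsupp.sum_congr step).trans (Finsupp.sum_single _)

lemma lsum_add_fun {α : Type*} (f : α →₀ Kv) (k1 k2 : α → Kv) :
    lsum f (fun p => k1 p + k2 p) = lsum f k1 + lsum f k2 := by
  unfold lsum
  rw [← Finsupp.sum_add]
  exact Finsupp.sum_congr fun p _ => by ring


lemma single_eq_smul_sw (m : FreeMonoid (GenI ω)) (c : Kv) :
    (MonoidAlgebra.single m c : FA ω) = c • sw ω (FreeMonoid.toList m) := by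
  unfold sw
  rw [MonoidAlgebra.smul_single', mul_one, FreeMonoid.ofList_toList]

/-! ### axiom 4 -/

lemma ax4_core (hsym : ∀ i j, e i j = e j i) (u w w' : List (GenI ω)) :
    Bform ω e ν (sw ω u * sw ω w) (sw ω w') =
      lsum (deltaWord ω e w') (fun p =>
        Bform ω e ν (sw ω u) (sw ω p.1) * Bform ω e ν (sw ω w) (sw ω p.2)) := by
  rw [sw_mul, Bform_sw, pair_hl e ν hsym u w w']
  exact (congrArg (lsum (deltaWord ω e w'))
    (funext fun p => by rw [Bform_sw, Bform_sw])).symm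

lemma ax4_swa (hsym : ∀ i j, e i j = e j i) (u : List (GenI ω)) (b : FA ω)
    (w' : List (GenI ω)) :
    Bform ω e ν (sw ω u * b) (sw ω w') =
      lsum (deltaWord ω e w') (fun p =>
        Bform ω e ν (sw ω u) (sw ω p.1) * Bform ω e ν b (sw ω p.2)) := by
  induction b using MonoidAlgebra.induction_linear with
  | zero =>
    rw [mul_zero, map_zero, LinearMap.zero_apply]
    exact (lsum_eq_zero fun p _ => by simp).symm
  | add f g hf hg =>
    rw [mul_add, map_add, LinearMap.add_apply, hf, hg, ← lsum_add_fun]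
    exact congrArg (lsum (deltaWord ω e w'))
      (funext fun p => by rw [map_add, LinearMap.add_apply, mul_add])
  | single m cm =>
    rw [single_eq_smul_sw, mul_smul_comm, map_smul, LinearMap.smul_apply, smul_eq_mul,
      ax4_core e ν hsym u (FreeMonoid.toList m) w', lsum_const_mul]
    exact congrArg (lsum (deltaWord ω e w'))
      (funext fun p => by rw [map_smul, LinearMap.smul_apply, smul_eq_mul]; ring)

lemma ax4_words (hsym : ∀ i j, e i j = e j i) (a b : FA ω) (w' : List (GenI ω)) :
    Bform ω e ν (a * b) (sw ω w') =
      lsum (deltaWord ω e w') (fun p =>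
        Bform ω e ν a (sw ω p.1) * Bform ω e ν b (sw ω p.2)) := by
  induction a using MonoidAlgebra.induction_linear with
  | zero =>
    rw [zero_mul, map_zero, LinearMap.zero_apply]
    exact (lsum_eq_zero fun p _ => by simp).symm
  | add f g hf hg =>
    rw [add_mul, map_add, LinearMap.add_apply, hf, hg, ← lsum_add_fun]
    exact congrArg (lsum (deltaWord ω e w'))
      (funext fun p => by rw [map_add, LinearMap.add_apply, add_mul])
  | single m cm =>
    rw [single_eq_smul_sw, smul_mul_assoc, map_smul, LinearMap.smul_apply, smul_eq_mul,
      ax4_swa e ν hsym (FreeMonoid.toList m) b w', lsum_const_mul]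
    exact congrArg (lsum (deltaWord ω e w'))
      (funext fun p => by rw [map_smul, LinearMap.smul_apply, smul_eq_mul]; ring)

lemma ax4 (hsym : ∀ i j, e i j = e j i) (a b c : FA ω) :
    Bform ω e ν (a * b) c = (deltaF ω e c).sum fun p coeff =>
      coeff * Bform ω e ν a (sw ω p.1) * Bform ω e ν b (sw ω p.2) := by
  rw [show ((deltaF ω e c).sum fun p coeff =>
      coeff * Bform ω e ν a (sw ω p.1) * Bform ω e ν b (sw ω p.2)) =
    lsum (deltaF ω e c) (fun p =>
      Bform ω e ν a (sw ω p.1) * Bform ω e ν b (sw ω p.2)) from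
    Finsupp.sum_congr fun p _ => mul_assoc _ _ _]
  induction c using MonoidAlgebra.induction_linear with
  | zero => rw [deltaF_zero, map_zero, lsum_zero]
  | add f g hf hg => rw [deltaF_add, lsum_add, map_add, hf, hg]
  | single m cm =>
    rw [deltaF_single', lsum_smul, single_eq_smul_sw, map_smul, smul_eq_mul]
    rw [ax4_words e ν hsym a b (FreeMonoid.toList m)]

/-! ### axiom 5 -/

lemma ax5_core (hsym : ∀ i j, e i j = e j i) (w u w' : List (GenI ω)) :
    Bform ω e ν (sw ω w) (sw ω u * sw ω w') =
      lsum (deltaWord ω e w) (fun p =>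
        Bform ω e ν (sw ω p.1) (sw ω u) * Bform ω e ν (sw ω p.2) (sw ω w')) := by
  rw [sw_mul, Bform_sw, pair_hr e ν hsym (w.length + u.length + w'.length) w u w' le_rfl]
  exact (congrArg (lsum (deltaWord ω e w))
    (funext fun p => by rw [Bform_sw, Bform_sw])).symm

lemma ax5_swb (hsym : ∀ i j, e i j = e j i) (w u : List (GenI ω)) (c : FA ω) :
    Bform ω e ν (sw ω w) (sw ω u * c) =
      lsum (deltaWord ω e w) (fun p =>
        Bform ω e ν (sw ω p.1) (sw ω u) * Bform ω e ν (sw ω p.2) c) := by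
  induction c using MonoidAlgebra.induction_linear with
  | zero =>
    rw [mul_zero, map_zero]
    exact (lsum_eq_zero fun p _ => by simp).symm
  | add f g hf hg =>
    rw [mul_add, map_add, hf, hg, ← lsum_add_fun]
    exact congrArg (lsum (deltaWord ω e w))
      (funext fun p => by rw [map_add, mul_add])
  | single m cm =>
    rw [single_eq_smul_sw, mul_smul_comm, map_smul, smul_eq_mul,
      ax5_core e ν hsym w u (FreeMonoid.toList m), lsum_const_mul]
    exact congrArg (lsum (deltaWord ω e w))
      (funext fun p => by rw [map_smul, smul_eq_mul]; ring)

lemma ax5_words (hsym : ∀ i j, e i j = e j i) (w : List (GenI ω)) (b c : FA ω) :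
    Bform ω e ν (sw ω w) (b * c) =
      lsum (deltaWord ω e w) (fun p =>
        Bform ω e ν (sw ω p.1) b * Bform ω e ν (sw ω p.2) c) := by
  induction b using MonoidAlgebra.induction_linear with
  | zero =>
    rw [zero_mul, map_zero]
    exact (lsum_eq_zero fun p _ => by simp).symm
  | add f g hf hg =>
    rw [add_mul, map_add, hf, hg, ← lsum_add_fun]
    exact congrArg (lsum (deltaWord ω e w))
      (funext fun p => by rw [map_add, add_mul])
  | single m cm =>
    rw [single_eq_smul_sw, smul_mul_assoc, map_smul, smul_eq_mul,
      ax5_swb e ν hsym w (FreeMonoid.toList m) c, lsum_const_mul]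
    exact congrArg (lsum (deltaWord ω e w))
      (funext fun p => by rw [map_smul, smul_eq_mul]; ring)

lemma ax5 (hsym : ∀ i j, e i j = e j i) (a b c : FA ω) :
    Bform ω e ν a (b * c) = (deltaF ω e a).sum fun p coeff =>
      coeff * Bform ω e ν (sw ω p.1) b * Bform ω e ν (sw ω p.2) c := by
  rw [show ((deltaF ω e a).sum fun p coeff =>
      coeff * Bform ω e ν (sw ω p.1) b * Bform ω e ν (sw ω p.2) c) =
    lsum (deltaF ω e a) (fun p =>
      Bform ω e ν (sw ω p.1) b * Bform ω e ν (sw ω p.2) c) from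
    Finsupp.sum_congr fun p _ => mul_assoc _ _ _]
  induction a using MonoidAlgebra.induction_linear with
  | zero => rw [deltaF_zero, map_zero, LinearMap.zero_apply, lsum_zero]
  | add f g hf hg => rw [deltaF_add, lsum_add, map_add, LinearMap.add_apply, hf, hg]
  | single m cm =>
    rw [deltaF_single', lsum_smul, single_eq_smul_sw, map_smul, LinearMap.smul_apply,
      smul_eq_mul]
    rw [ax5_words e ν hsym (FreeMonoid.toList m) b c]

/-! ### uniqueness -/

lemma unique_key (B' : FA ω →ₗ[Kv] FA ω →ₗ[Kv] Kv) (hB' : PairingAxioms ω e ν B') (N : ℕ) :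
    ∀ w w' : List (GenI ω), w.length + w'.length ≤ N →
      B' (sw ω w) (sw ω w') = pair ω e ν w w' := by
  obtain ⟨h1, h2, h3, h4, h5⟩ := hB'
  induction N with
  | zero =>
    intro w w' hN
    have hw : w = [] := List.length_eq_zero_iff.mp (by omega)
    have hw' : w' = [] := List.length_eq_zero_iff.mp (by omega)
    subst hw hw'
    rw [sw_nil_eq_one, h1, pair_nil_nil]
  | succ N ih =>
    intro w w' hN
    cases w with
    | nil =>
      cases w' with
      | nil => rw [sw_nil_eq_one, h1, pair_nil_nil]
      | cons c w'' =>
        rw [pair_nil_cons]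
        refine h2 [] (c :: w'') fun hEq => ?_
        have hp := wtw_cons_pos ω c w''
        have h0 := congrFun hEq c.1.1
        rw [wtw_nil] at h0
        omega
    | cons g w0 =>
      cases w0 with
      | nil =>
        cases w' with
        | nil =>
          rw [pair_single_nil]
          refine h2 [g] [] fun hEq => ?_
          have hp := wtw_cons_pos ω g []
          have h0 := congrFun hEq g.1.1
          rw [wtw_nil] at h0
          omega
        | cons c w1 =>
          cases w1 with
          | nil =>
            rw [pair_single_single]
            by_cases hgc : g = c
            · subst hgc
              rw [if_pos rfl]
              exact h3 g
            · rw [if_neg hgc]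
              exact h2 [g] [c] fun hEq => hgc (gen_eq_of_wtw ω hEq)
          | cons b t =>
            rw [pair_single_long e ν g c b t]
            rw [show (c :: b :: t : List (GenI ω)) = [c] ++ (b :: t) from rfl, ← sw_mul,
              h5 (sw ω [g]) (sw ω [c]) (sw ω (b :: t)), deltaF_sw, deltaWord_one]
            rw [show ((deltaGen ω g).sum fun p coeff =>
                coeff * B' (sw ω p.1) (sw ω [c]) * B' (sw ω p.2) (sw ω (b :: t))) =
              lsum (deltaGen ω g) (fun p =>
                B' (sw ω p.1) (sw ω [c]) * B' (sw ω p.2) (sw ω (b :: t))) from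
              Finsupp.sum_congr fun p _ => mul_assoc _ _ _]
            refine lsum_congr fun p hp => ?_
            obtain ⟨t', ht', hpe⟩ := support_deltaGen hp
            have l1 : p.1.length ≤ 1 := by rw [hpe]; exact mkw0_length g t'
            have l2 : p.2.length ≤ 1 := by rw [hpe]; exact mkw0_length g _
            simp only [List.length_cons, List.length_singleton, List.length_nil] at hN
            rw [ih p.1 [c] (by simp; omega), ih p.2 (b :: t) (by simp; omega)]
      | cons a u =>
        cases w' with
        | nil =>
          show _ = (0 : Kv)
          refine h2 (g :: a :: u) [] fun hEq => ?_
          have hp := wtw_cons_pos ω g (a :: u)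
          have h0 := congrFun hEq g.1.1
          rw [wtw_nil] at h0
          omega
        | cons c w'' =>
          rw [pair_long e ν g a c u w'']
          rw [show (g :: a :: u : List (GenI ω)) = [g] ++ (a :: u) from rfl, ← sw_mul,
            h4 (sw ω [g]) (sw ω (a :: u)) (sw ω (c :: w'')), deltaF_sw]
          rw [show ((deltaWord ω e (c :: w'')).sum fun p coeff =>
              coeff * B' (sw ω [g]) (sw ω p.1) * B' (sw ω (a :: u)) (sw ω p.2)) =
            lsum (deltaWord ω e (c :: w'')) (fun p =>
              B' (sw ω [g]) (sw ω p.1) * B' (sw ω (a :: u)) (sw ω p.2)) from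
            Finsupp.sum_congr fun p _ => mul_assoc _ _ _]
          refine lsum_congr fun p hp => ?_
          obtain ⟨l1, l2, _⟩ := support_deltaWord e hp
          simp only [List.length_cons] at l1 l2 hN
          rw [ih [g] p.1 (by simp; omega), ih (a :: u) p.2 (by simp; omega)]

lemma unique_B (B' : FA ω →ₗ[Kv] FA ω →ₗ[Kv] Kv) (hB' : PairingAxioms ω e ν B') :
    B' = Bform ω e ν := by
  refine MonoidAlgebra.lhom_ext' fun m => LinearMap.ext fun cm => ?_
  show B' (MonoidAlgebra.single m cm) = Bform ω e ν (MonoidAlgebra.single m cm)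
  refine LinearMap.ext fun y => ?_
  induction y using MonoidAlgebra.induction_linear with
  | zero => rw [map_zero, map_zero]
  | add f g hf hg => rw [map_add, map_add, hf, hg]
  | single m' cm' =>
    rw [single_eq_smul_sw, single_eq_smul_sw]
    simp only [map_smul, LinearMap.smul_apply, smul_eq_mul]
    congr 1
    congr 1
    exact (unique_key e ν B' hB'
      ((FreeMonoid.toList m).length + (FreeMonoid.toList m').length)
      (FreeMonoid.toList m) (FreeMonoid.toList m') le_rfl).trans
      (Bform_sw e ν (FreeMonoid.toList m) (FreeMonoid.toList m')).symm

end HP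
end

/-- for any family of scalars `ν_ι` there is a unique bilinear form
`⟨-,-⟩` on `F` vanishing on pairs of distinct weights, with `⟨E_ι,E_ι⟩ = ν_ι`, and
compatible with the comultiplication `δ` (Hopf pairing property). -/
theorem exists_unique_hopf_pairing {I : Type} [DecidableEq I]
    (ω : I → ℕ) (e : I → I → ℤ) (hsym : ∀ i j, e i j = e j i)
    (hii : ∀ i, e i i = 2 - 2 * (ω i : ℤ))
    (ν : GenI ω → Kv) :
    ∃! B : FA ω →ₗ[Kv] FA ω →ₗ[Kv] Kv, PairingAxioms ω e ν B := by
  refine ⟨HP.Bform ω e ν, ⟨?_, ?_, ?_, ?_, ?_⟩, fun B' hB' => HP.unique_B e ν B' hB'⟩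
  · rw [← HP.sw_nil_eq_one, HP.Bform_sw, HP.pair_nil_nil]
  · intro w w' h
    rw [HP.Bform_sw]
    exact HP.pair_wt e ν h
  · intro g
    rw [HP.Bform_sw, HP.pair_single_single, if_pos rfl]
  · exact HP.ax4 e ν hsym
  · exact HP.ax5 e ν hsym
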